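/- arXiv:2604.15457 — 3 statements merged into one kernel-verified Lean document; each statement's English description precedes it below -/
import Mathlib

section
/- Let m(s) = f0 + s·g + (1/2) sᵀ H s be a quadratic model, and suppose s* satisfies (H + ν I + ℓ I) s* = -g with H + ν I + ℓ I ⪰ 0 and ℓ ≥ 0, where ν = √(Λ‖g‖) and ‖g‖ = 16 Λ Δ² for some Λ, Δ > 0. Then m(0) - m(s*) ≥ 2 Λ Δ ‖s*‖². -/
open scoped RealInnerProductSpace

theorem stmt0 {d : ℕ} (g : EuclideanSpace ℝ (Fin d))
    (H : EuclideanSpace ℝ (Fin d) →L[ℝ] EuclideanSpace ℝ (Fin d))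
    (hsymm : ∀ u v : EuclideanSpace ℝ (Fin d), ⟪H u, v⟫ = ⟪u, H v⟫)
    (Λ Δ ℓ ν f0 : ℝ) (hΛ : 0 < Λ) (hΔ : 0 < Δ) (hℓ : 0 ≤ ℓ)
    (hν : ν = Real.sqrt (Λ * ‖g‖)) (hg : ‖g‖ = 16 * Λ * Δ ^ 2)
    (m : EuclideanSpace ℝ (Fin d) → ℝ)
    (hm : ∀ s, m s = f0 + ⟪s, g⟫ + (1 / 2) * ⟪s, H s⟫)
    (sstar : EuclideanSpace ℝ (Fin d))
    (hstat : H sstar + ν • sstar + ℓ • sstar = -g)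
    (hpsd : ∀ v : EuclideanSpace ℝ (Fin d), 0 ≤ ⟪v, H v⟫ + ν * ‖v‖ ^ 2 + ℓ * ‖v‖ ^ 2) :
    m 0 - m sstar ≥ 2 * Λ * Δ * ‖sstar‖ ^ 2 := by
  have hν4 : ν = 4 * Λ * Δ := by
    rw [hν, hg, show Λ * (16 * Λ * Δ ^ 2) = (4 * Λ * Δ) ^ 2 by ring]
    exact Real.sqrt_sq (by positivity)
  have hinner : ⟪sstar, g⟫ = -(⟪sstar, H sstar⟫ + ν * ‖sstar‖ ^ 2 + ℓ * ‖sstar‖ ^ 2) := by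
    have h := congrArg (fun v => (inner ℝ sstar v : ℝ)) hstat
    simp only [inner_add_right, inner_smul_right, inner_neg_right,
      real_inner_self_eq_norm_sq] at h
    linarith [h]
  have hpsd' := hpsd sstar
  have h0 : m 0 = f0 := by simp [hm]
  rw [h0, hm]
  nlinarith [mul_nonneg hℓ (sq_nonneg ‖sstar‖), sq_nonneg ‖sstar‖]
end

section
/- Let f : ℝᵈ → ℝ be C² with L_H-Lipschitz Hessian, and fix x ∈ ℝᵈ, Δ > 0. Define the forward-difference Hessian H with j-th column H eⱼ = (Ĝⱼ - Ĝ₀)/Δ, where Ĝ₀ = ∇f(x) + E₀ and Ĝⱼ = ∇f(x + Δ eⱼ) + Eⱼ for error vectors E₀, E₁, …, E_d ∈ ℝᵈ. Then ‖∇²f(x) - H‖ ≤ √d ( (L_H/2) Δ + (max_{1≤j≤d} ‖Eⱼ - E₀‖)/Δ ). -/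
open Set

/-- Quadratic Taylor bound for a function with Lipschitz derivative. -/
lemma taylor_quad {E F : Type*} [NormedAddCommGroup E] [NormedSpace ℝ E]
    [NormedAddCommGroup F] [NormedSpace ℝ F]
    (g : E → F) (hg : Differentiable ℝ g) (L : ℝ) (hL : 0 ≤ L)
    (hlip : ∀ x₁ x₂, ‖fderiv ℝ g x₁ - fderiv ℝ g x₂‖ ≤ L * ‖x₁ - x₂‖)
    (x v : E) :
    ‖g (x + v) - g x - fderiv ℝ g x v‖ ≤ L / 2 * ‖v‖ ^ 2 := by
  set h : ℝ → F := fun t => g (x + t • v) - g x - t • fderiv ℝ g x v with hh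
  set h' : ℝ → F := fun t => fderiv ℝ g (x + t • v) v - fderiv ℝ g x v with hh'
  have hd : ∀ t : ℝ, HasDerivAt h (h' t) t := by
    intro t
    have h1 : HasDerivAt (fun t : ℝ => x + t • v) v t := by
      simpa using ((hasDerivAt_id t).smul_const v).const_add x
    have h2 : HasDerivAt (fun t : ℝ => g (x + t • v)) (fderiv ℝ g (x + t • v) v) t :=
      (hg (x + t • v)).hasFDerivAt.comp_hasDerivAt t h1
    exact ((h2.sub_const (g x)).sub ((hasDerivAt_id t).smul_const (fderiv ℝ g x v))).congr_deriv (by simp [h'])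
  set B : ℝ → ℝ := fun t => L / 2 * t ^ 2 * ‖v‖ ^ 2 with hB
  set B' : ℝ → ℝ := fun t => L * t * ‖v‖ ^ 2 with hB'
  have hBd : ∀ t : ℝ, HasDerivAt B (B' t) t := by
    intro t
    have := ((hasDerivAt_pow 2 t).const_mul (L / 2)).mul_const (‖v‖ ^ 2)
    refine this.congr_deriv ?_
    simp only [B']; ring
  have key : ∀ ⦃t⦄, t ∈ Icc (0:ℝ) 1 → ‖h t‖ ≤ B t := by
    refine image_norm_le_of_norm_deriv_right_le_deriv_boundary
      (fun t _ => (hd t).continuousAt.continuousWithinAt)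
      (fun t ht => (hd t).hasDerivWithinAt) ?_ hBd ?_
    · simp [h, B]
    · intro t ht
      have h3 : ‖h' t‖ ≤ ‖fderiv ℝ g (x + t • v) - fderiv ℝ g x‖ * ‖v‖ := by
        simpa [h'] using (fderiv ℝ g (x + t • v) - fderiv ℝ g x).le_opNorm v
      have h4 : ‖fderiv ℝ g (x + t • v) - fderiv ℝ g x‖ ≤ L * (t * ‖v‖) := by
        have := hlip (x + t • v) x
        simpa [norm_smul, abs_of_nonneg ht.1] using this
      calc ‖h' t‖ ≤ L * (t * ‖v‖) * ‖v‖ :=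
            h3.trans (mul_le_mul_of_nonneg_right h4 (norm_nonneg v))
        _ = B' t := by rw [hB']; ring
  have := key (right_mem_Icc.2 zero_le_one)
  simpa [h, B] using this

/-- Operator norm bound by column norms on Euclidean space. -/
lemma opNorm_le_sqrt_card {d : ℕ} {F : Type*} [NormedAddCommGroup F] [NormedSpace ℝ F]
    (T : EuclideanSpace ℝ (Fin d) →L[ℝ] F) (C : ℝ) (hC : 0 ≤ C)
    (hcol : ∀ j : Fin d, ‖T (EuclideanSpace.single j 1)‖ ≤ C) :
    ‖T‖ ≤ Real.sqrt d * C := by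
  refine T.opNorm_le_bound (by positivity) (fun u => ?_)
  have hu : u = ∑ j : Fin d, u j • EuclideanSpace.single j 1 := by
    have := (EuclideanSpace.basisFun (Fin d) ℝ).sum_repr u
    simp only [EuclideanSpace.basisFun_apply, EuclideanSpace.basisFun_repr] at this
    exact this.symm
  have h1 : ‖T u‖ ≤ ∑ j : Fin d, |u j| * C := by
    have hTu : T u = ∑ j : Fin d, u j • T (EuclideanSpace.single j 1) := by
      conv_lhs => rw [hu]
      simp [map_sum]
    calc ‖T u‖ = ‖∑ j : Fin d, u j • T (EuclideanSpace.single j 1)‖ := by rw [hTu]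
      _ ≤ ∑ j : Fin d, ‖u j • T (EuclideanSpace.single j 1)‖ := norm_sum_le _ _
      _ ≤ ∑ j : Fin d, |u j| * C := by
          refine Finset.sum_le_sum (fun j _ => ?_)
          rw [norm_smul, Real.norm_eq_abs]
          exact mul_le_mul_of_nonneg_left (hcol j) (abs_nonneg _)
  have h2 : ∑ j : Fin d, |u j| ≤ Real.sqrt d * ‖u‖ := by
    have hsq : (∑ j : Fin d, |u j|) ^ 2 ≤ (d : ℝ) * ∑ j : Fin d, |u j| ^ 2 := by
      simpa using sq_sum_le_card_mul_sum_sq (s := Finset.univ) (f := fun j : Fin d => |u j|)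
    have hnorm : ‖u‖ ^ 2 = ∑ j : Fin d, |u j| ^ 2 := by
      rw [EuclideanSpace.norm_eq]
      rw [Real.sq_sqrt (by positivity)]
      simp [sq_abs, Real.norm_eq_abs]
    have h0 : (0:ℝ) ≤ ∑ j : Fin d, |u j| := Finset.sum_nonneg fun j _ => abs_nonneg _
    have := Real.sqrt_le_sqrt hsq
    rw [Real.sqrt_sq h0] at this
    refine this.trans ?_
    rw [Real.sqrt_mul (Nat.cast_nonneg d), ← hnorm, Real.sqrt_sq (norm_nonneg u)]
  calc ‖T u‖ ≤ (∑ j : Fin d, |u j|) * C := by rw [Finset.sum_mul] at *; exact h1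
    _ ≤ Real.sqrt d * ‖u‖ * C := mul_le_mul_of_nonneg_right h2 hC
    _ = Real.sqrt d * C * ‖u‖ := by ring

theorem stmt3 {d : ℕ} (hd : 0 < d)
    (f : EuclideanSpace ℝ (Fin d) → ℝ) (LH Δ : ℝ)
    (hf : ContDiff ℝ 2 f) (hΔ : 0 < Δ)
    (hlip : ∀ x₁ x₂ : EuclideanSpace ℝ (Fin d),
      ‖fderiv ℝ (gradient f) x₁ - fderiv ℝ (gradient f) x₂‖ ≤ LH * ‖x₁ - x₂‖)
    (x E0 : EuclideanSpace ℝ (Fin d)) (Err : Fin d → EuclideanSpace ℝ (Fin d))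
    (H : EuclideanSpace ℝ (Fin d) →L[ℝ] EuclideanSpace ℝ (Fin d))
    (hH : ∀ j : Fin d, H (EuclideanSpace.single j 1) =
      Δ⁻¹ • ((gradient f (x + Δ • EuclideanSpace.single j 1) + Err j) -
        (gradient f x + E0))) :
    ‖fderiv ℝ (gradient f) x - H‖ ≤
      Real.sqrt d * (LH / 2 * Δ + sSup (Set.range fun j => ‖Err j - E0‖) / Δ) := by
  haveI : Nonempty (Fin d) := ⟨⟨0, hd⟩⟩
  set M := sSup (Set.range fun j => ‖Err j - E0‖) with hMdef
  have hbdd : BddAbove (Set.range fun j => ‖Err j - E0‖) := (Set.finite_range _).bddAbove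
  have hM : ∀ j : Fin d, ‖Err j - E0‖ ≤ M := fun j => le_csSup hbdd ⟨j, rfl⟩
  have hM0 : 0 ≤ M := (norm_nonneg _).trans (hM ⟨0, hd⟩)
  -- differentiability of the gradient
  have hfd : Differentiable ℝ (fderiv ℝ f) :=
    (hf.fderiv_right (m := 1) (by norm_num)).differentiable one_ne_zero
  have hgd : Differentiable ℝ (gradient f) := by
    have heq : gradient f = fun y =>
        (InnerProductSpace.toDual ℝ (EuclideanSpace ℝ (Fin d))).symm (fderiv ℝ f y) := rfl
    rw [heq]
    exact (InnerProductSpace.toDual ℝ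
      (EuclideanSpace ℝ (Fin d))).symm.toContinuousLinearEquiv.differentiable.comp hfd
  -- nonnegativity of LH
  have hLH : 0 ≤ LH := by
    have h := hlip (x + EuclideanSpace.single (⟨0, hd⟩ : Fin d) 1) x
    have h2 : ‖x + EuclideanSpace.single (⟨0, hd⟩ : Fin d) 1 - x‖ = 1 := by
      simp [EuclideanSpace.norm_single]
    rw [h2, mul_one] at h
    exact (norm_nonneg _).trans h
  have hC : 0 ≤ LH / 2 * Δ + M / Δ := by positivity
  refine opNorm_le_sqrt_card _ _ hC (fun j => ?_)
  set e := EuclideanSpace.single (𝕜 := ℝ) j (1 : ℝ) with he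
  set v := Δ • e with hv
  set D := fderiv ℝ (gradient f) x with hD
  have hvnorm : ‖v‖ = Δ := by
    rw [hv, norm_smul, Real.norm_eq_abs, abs_of_pos hΔ, EuclideanSpace.norm_single,
      norm_one, mul_one]
  have htay : ‖gradient f (x + v) - gradient f x - D v‖ ≤ LH / 2 * ‖v‖ ^ 2 :=
    taylor_quad (gradient f) hgd LH hLH hlip x v
  have hDe : D e = Δ⁻¹ • D v := by
    rw [hv, map_smul, smul_smul, inv_mul_cancel₀ hΔ.ne', one_smul]
  have hcol : (D - H) e =
      Δ⁻¹ • (D v - (gradient f (x + v) - gradient f x) - (Err j - E0)) := by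
    rw [ContinuousLinearMap.sub_apply, hH j, hDe, ← smul_sub]
    congr 1
    abel
  rw [hcol, norm_smul, Real.norm_eq_abs, abs_of_pos (inv_pos.2 hΔ)]
  have hb : ‖D v - (gradient f (x + v) - gradient f x) - (Err j - E0)‖ ≤
      LH / 2 * Δ ^ 2 + M := by
    calc ‖D v - (gradient f (x + v) - gradient f x) - (Err j - E0)‖
        ≤ ‖D v - (gradient f (x + v) - gradient f x)‖ + ‖Err j - E0‖ := norm_sub_le _ _
      _ ≤ LH / 2 * Δ ^ 2 + M := by
          have : ‖D v - (gradient f (x + v) - gradient f x)‖ =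
              ‖gradient f (x + v) - gradient f x - D v‖ := norm_sub_rev _ _
          rw [this]
          have h3 : ‖gradient f (x + v) - gradient f x - D v‖ ≤ LH / 2 * Δ ^ 2 := by
            rw [← hvnorm] at *; exact htay
          exact add_le_add h3 (hM j)
  calc Δ⁻¹ * ‖D v - (gradient f (x + v) - gradient f x) - (Err j - E0)‖
      ≤ Δ⁻¹ * (LH / 2 * Δ ^ 2 + M) := by
        exact mul_le_mul_of_nonneg_left hb (inv_nonneg.2 hΔ.le)
    _ = LH / 2 * Δ + M / Δ := by field_simp
end

section
/- Let g ∈ ℝᵈ with g ≠ 0, H a d×d symmetric matrix with ‖H‖ ≤ κ_H, Λ > 0, Δ = √(‖g‖/(16Λ)), ℓ ≥ 0, ν = √(Λ‖g‖), and suppose s satisfies (H + νI + ℓI)s = -g with ℓ = 0. Then ‖s‖ ≥ 16ΛΔ² / (κ_H + 4ΛΔ). -/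
open scoped RealInnerProductSpace

theorem stmt4 {d : ℕ} (g s : EuclideanSpace ℝ (Fin d)) (hg : g ≠ 0)
    (H : EuclideanSpace ℝ (Fin d) →L[ℝ] EuclideanSpace ℝ (Fin d))
    (hsymm : ∀ u v : EuclideanSpace ℝ (Fin d), ⟪H u, v⟫ = ⟪u, H v⟫)
    (κH Λ Δ ℓ ν : ℝ) (hκ : ‖H‖ ≤ κH) (hΛ : 0 < Λ)
    (hΔ : Δ = Real.sqrt (‖g‖ / (16 * Λ))) (hℓ : 0 ≤ ℓ) (hℓ0 : ℓ = 0)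
    (hν : ν = Real.sqrt (Λ * ‖g‖))
    (hstat : H s + ν • s + ℓ • s = -g) :
    ‖s‖ ≥ 16 * Λ * Δ ^ 2 / (κH + 4 * Λ * Δ) := by
  have hgpos : 0 < ‖g‖ := norm_pos_iff.mpr hg
  have hΔsq : Δ ^ 2 = ‖g‖ / (16 * Λ) := by
    rw [hΔ, Real.sq_sqrt]
    positivity
  have hΔnn : 0 ≤ Δ := hΔ ▸ Real.sqrt_nonneg _
  have h4 : 4 * Λ * Δ = ν := by
    rw [hν, hΔ]
    rw [show (4 : ℝ) * Λ = Real.sqrt ((4 * Λ) ^ 2) by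
      rw [Real.sqrt_sq (by positivity)]]
    rw [← Real.sqrt_mul (by positivity)]
    congr 1
    field_simp
    ring
  have hnum : 16 * Λ * Δ ^ 2 = ‖g‖ := by
    rw [hΔsq]; field_simp
  have hνpos : 0 < ν := by
    rw [hν]; positivity
  have hκnn : 0 ≤ κH := le_trans (norm_nonneg H) hκ
  have hbound : ‖g‖ ≤ (κH + ν) * ‖s‖ := by
    have : ‖g‖ = ‖H s + ν • s‖ := by
      rw [show H s + ν • s = -g by simpa [hℓ0] using hstat, norm_neg]
    rw [this]
    calc ‖H s + ν • s‖ ≤ ‖H s‖ + ‖ν • s‖ := norm_add_le _ _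
      _ ≤ κH * ‖s‖ + ν * ‖s‖ := by
          gcongr
          · exact le_trans (H.le_opNorm s) (by gcongr)
          · rw [norm_smul, Real.norm_of_nonneg hνpos.le]
      _ = (κH + ν) * ‖s‖ := by ring
  rw [hnum, h4, ge_iff_le, div_le_iff₀ (by positivity)]
  linarith
end
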